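/- For every z > 0, the function ψ(z) = ∫₀^z ∫₀^τ e^{τ²} e^{−s²} ds dτ satisfies the lower bound ψ(z) ≥ (e^{z²} − 1)/(4z²) − 1/2. -/

import Mathlib

open intervalIntegral Real MeasureTheory

private lemma deriv_aux (c : ℝ) (hc : c ≠ 0) (x : ℝ) :
    HasDerivAt (fun s : ℝ => Real.exp (c * s ^ 2) / (2 * c))
      (x * Real.exp (c * x ^ 2)) x := by
  have h := (((hasDerivAt_pow 2 x).const_mul c).exp).div_const (2 * c)
  refine h.congr_deriv ?_
  field_simp
  ring

private lemma int_aux (c : ℝ) (hc : c ≠ 0) (τ : ℝ) :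
    ∫ s in (0:ℝ)..τ, s * Real.exp (c * s ^ 2)
      = (Real.exp (c * τ ^ 2) - 1) / (2 * c) := by
  have := intervalIntegral.integral_eq_sub_of_hasDerivAt
    (f := fun s : ℝ => Real.exp (c * s ^ 2) / (2 * c))
    (fun x _ => deriv_aux c hc x)
    (Continuous.intervalIntegrable (by fun_prop) 0 τ)
  rw [this]
  simp [sub_div]

/-- For every `z > 0`, `ψ(z) = ∫₀^z ∫₀^τ e^{τ²} e^{−s²} ds dτ` satisfies
`ψ(z) ≥ (e^{z²} − 1)/(4z²) − 1/2`. -/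
theorem psi_lower_bound (z : ℝ) (hz : 0 < z) :
    (Real.exp (z ^ 2) - 1) / (4 * z ^ 2) - 1 / 2
      ≤ ∫ τ in (0:ℝ)..z, Real.exp (τ ^ 2) * ∫ s in (0:ℝ)..τ, Real.exp (-s ^ 2) := by
  have hcont : Continuous fun s : ℝ => Real.exp (-s ^ 2) := by fun_prop
  -- step 1: pointwise lower bound for the inner integral on [0,z]
  have step1 : ∀ τ ∈ Set.Icc (0:ℝ) z,
      (Real.exp (τ ^ 2) - 1) / (2 * z) ≤ Real.exp (τ ^ 2) * ∫ s in (0:ℝ)..τ, Real.exp (-s ^ 2) := by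
    intro τ hτ
    have h1 : ∫ s in (0:ℝ)..τ, (s / z) * Real.exp (-s ^ 2)
        = (1 - Real.exp (-τ ^ 2)) / (2 * z) := by
      have : ∀ s : ℝ, (s / z) * Real.exp (-s ^ 2)
          = (1 / z) * (s * Real.exp ((-1) * s ^ 2)) := by
        intro s; ring_nf
      simp_rw [this]
      rw [intervalIntegral.integral_const_mul, int_aux (-1) (by norm_num) τ]
      field_simp
      ring_nf
    have hmono : ∫ s in (0:ℝ)..τ, (s / z) * Real.exp (-s ^ 2)
        ≤ ∫ s in (0:ℝ)..τ, Real.exp (-s ^ 2) := by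
      apply intervalIntegral.integral_mono_on hτ.1
      · exact Continuous.intervalIntegrable (by fun_prop) 0 τ
      · exact hcont.intervalIntegrable 0 τ
      · intro s hs
        have h0 : 0 ≤ s := hs.1
        have h1 : s / z ≤ 1 := by
          rw [div_le_one hz]; exact le_trans hs.2 hτ.2
        nlinarith [Real.exp_pos (-s ^ 2)]
    have key : (1 - Real.exp (-τ ^ 2)) / (2 * z) ≤ ∫ s in (0:ℝ)..τ, Real.exp (-s ^ 2) := by
      rw [← h1]; exact hmono
    have hE := Real.exp_pos (τ ^ 2)
    have := mul_le_mul_of_nonneg_left key hE.le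
    have hm : Real.exp (τ ^ 2) * Real.exp (-τ ^ 2) = 1 := by
      rw [← Real.exp_add]; simp
    calc (Real.exp (τ ^ 2) - 1) / (2 * z)
        = Real.exp (τ ^ 2) * ((1 - Real.exp (-τ ^ 2)) / (2 * z)) := by
          rw [← mul_div_assoc, mul_sub, hm, mul_one]
      _ ≤ _ := this
  -- integrability of outer integrand
  have hG : Continuous fun τ : ℝ => ∫ s in (0:ℝ)..τ, Real.exp (-s ^ 2) :=
    intervalIntegral.continuous_primitive (fun a b => hcont.intervalIntegrable a b) 0
  have houter : IntervalIntegrable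
      (fun τ : ℝ => Real.exp (τ ^ 2) * ∫ s in (0:ℝ)..τ, Real.exp (-s ^ 2)) volume 0 z :=
    Continuous.intervalIntegrable (by fun_prop) 0 z
  have step3 : ∫ τ in (0:ℝ)..z, (Real.exp (τ ^ 2) - 1) / (2 * z)
      ≤ ∫ τ in (0:ℝ)..z, Real.exp (τ ^ 2) * ∫ s in (0:ℝ)..τ, Real.exp (-s ^ 2) :=
    intervalIntegral.integral_mono_on hz.le
      (Continuous.intervalIntegrable (by fun_prop) 0 z) houter step1
  refine le_trans ?_ step3
  -- compute/estimate the LHS integral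
  have hsplit : ∫ τ in (0:ℝ)..z, (Real.exp (τ ^ 2) - 1) / (2 * z)
      = (1 / (2 * z)) * ((∫ τ in (0:ℝ)..z, Real.exp (τ ^ 2)) - z) := by
    have : ∀ τ : ℝ, (Real.exp (τ ^ 2) - 1) / (2 * z)
        = (1 / (2 * z)) * (Real.exp (τ ^ 2) - 1) := by intro τ; ring
    simp_rw [this]
    rw [intervalIntegral.integral_const_mul,
      intervalIntegral.integral_sub (Continuous.intervalIntegrable (by fun_prop) 0 z)
        (intervalIntegrable_const)]
    simp
  have hlb : (Real.exp (z ^ 2) - 1) / (2 * z) ≤ ∫ τ in (0:ℝ)..z, Real.exp (τ ^ 2) := by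
    have h1 : ∫ τ in (0:ℝ)..z, (τ / z) * Real.exp (τ ^ 2)
        = (Real.exp (z ^ 2) - 1) / (2 * z) := by
      have : ∀ τ : ℝ, (τ / z) * Real.exp (τ ^ 2)
          = (1 / z) * (τ * Real.exp (1 * τ ^ 2)) := by intro τ; ring_nf
      simp_rw [this]
      rw [intervalIntegral.integral_const_mul, int_aux 1 one_ne_zero z]
      simp
      ring
    rw [← h1]
    apply intervalIntegral.integral_mono_on hz.le
      (Continuous.intervalIntegrable (by fun_prop) 0 z)
      (Continuous.intervalIntegrable (by fun_prop) 0 z)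
    intro τ hτ
    have h1 : τ / z ≤ 1 := by rw [div_le_one hz]; exact hτ.2
    nlinarith [Real.exp_pos (τ ^ 2), hτ.1]
  rw [hsplit]
  have h2z : (0:ℝ) < 2 * z := by linarith
  have := mul_le_mul_of_nonneg_left hlb (by positivity : (0:ℝ) ≤ 1 / (2 * z))
  calc (Real.exp (z ^ 2) - 1) / (4 * z ^ 2) - 1 / 2
      = (1 / (2 * z)) * ((Real.exp (z ^ 2) - 1) / (2 * z) - z) := by
        field_simp; ring
    _ ≤ (1 / (2 * z)) * ((∫ τ in (0:ℝ)..z, Real.exp (τ ^ 2)) - z) := by nlinarith
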